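/- Let B and R be disjoint finite sets of blue and red points in the plane in general position, with |B| = b and |R| ≤ b − 3. Fix any blue point p ∈ B. Then there exist two other blue points q, q' ∈ B such that the closed triangle with vertices p, q, q' contains no red point of R. -/

import Mathlib

abbrev Pt := ℝ × ℝ

def GenPos (P : Finset Pt) : Prop :=
  ∀ p ∈ P, ∀ q ∈ P, ∀ r ∈ P, p ≠ q → p ≠ r → q ≠ r → ¬ Collinear ℝ ({p, q, r} : Set Pt)

namespace Stmt2Aux

def cr (ε : ℝ) (u v : Pt) : ℝ := ε * (u.1 * v.2 - u.2 * v.1)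

lemma cr_anti (ε : ℝ) (u v : Pt) : cr ε u v = - cr ε v u := by unfold cr; ring

lemma cr_self (ε : ℝ) (u : Pt) : cr ε u u = 0 := by unfold cr; ring

lemma pluecker (ε : ℝ) (u y x z : Pt) :
    cr ε u y * cr ε x z = cr ε u x * cr ε y z + cr ε u z * cr ε x y := by
  unfold cr; ring

lemma cr_comb (ε s t : ℝ) (w u v : Pt) :
    cr ε w (s • u + t • v) = s * cr ε w u + t * cr ε w v := by
  unfold cr
  simp [Prod.smul_def, smul_eq_mul]
  ring

lemma cr_zero_right (ε : ℝ) (u : Pt) : cr ε u 0 = 0 := by unfold cr; simp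

lemma collinear_of_cr {p q r : Pt} {ε : ℝ} (hε : ε ≠ 0) (hqp : q ≠ p)
    (h : cr ε (q - p) (r - p) = 0) : Collinear ℝ ({p, q, r} : Set Pt) := by
  have h0 : (q - p).1 * (r - p).2 - (q - p).2 * (r - p).1 = 0 := by
    unfold cr at h
    rcases mul_eq_zero.mp h with h' | h'
    · exact absurd h' hε
    · exact h'
  rw [collinear_iff_of_mem (Set.mem_insert p _)]
  refine ⟨q - p, ?_⟩
  intro x hx
  have hne : (q - p).1 ≠ 0 ∨ (q - p).2 ≠ 0 := by
    by_contra hcon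
    push_neg at hcon
    apply hqp
    have : q - p = 0 := Prod.ext hcon.1 hcon.2
    have := sub_eq_zero.mp this
    exact this
  simp only [Set.mem_insert_iff, Set.mem_singleton_iff] at hx
  simp only [Prod.fst_sub, Prod.snd_sub] at h0 hne
  rcases hx with rfl | rfl | rfl
  · exact ⟨0, by simp⟩
  · exact ⟨1, by simp⟩
  · rcases hne with h1 | h1
    · refine ⟨(x.1 - p.1) / (q.1 - p.1), ?_⟩
      have : ((x.1 - p.1) / (q.1 - p.1)) • (q - p) = x - p := by
        apply Prod.ext
        · simp only [Prod.smul_fst, smul_eq_mul, Prod.fst_sub]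
          field_simp
        · simp only [Prod.smul_snd, smul_eq_mul, Prod.snd_sub]
          rw [div_mul_eq_mul_div, div_eq_iff h1]
          linarith [h0]
      simp only [vadd_eq_add, this]
      abel
    · refine ⟨(x.2 - p.2) / (q.2 - p.2), ?_⟩
      have : ((x.2 - p.2) / (q.2 - p.2)) • (q - p) = x - p := by
        apply Prod.ext
        · simp only [Prod.smul_fst, smul_eq_mul, Prod.fst_sub]
          rw [div_mul_eq_mul_div, div_eq_iff h1]
          linarith [h0]
        · simp only [Prod.smul_snd, smul_eq_mul, Prod.snd_sub]
          field_simp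
      simp only [vadd_eq_add, this]
      abel

lemma key_lt {ε : ℝ} {u a b : Pt} (hu : u ≠ (0:Pt))
    (ha : 0 < cr ε u a) (hb : 0 < cr ε u b) (hab : 0 < cr ε a b) :
    (u.1 * b.1 + u.2 * b.2) / cr ε u b < (u.1 * a.1 + u.2 * a.2) / cr ε u a := by
  rw [div_lt_div_iff₀ hb ha]
  have hne : u.1 ≠ 0 ∨ u.2 ≠ 0 := by
    by_contra hcon
    push_neg at hcon
    exact hu (Prod.ext hcon.1 hcon.2)
  have hnorm : 0 < u.1 * u.1 + u.2 * u.2 := by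
    rcases hne with h | h
    · nlinarith [mul_self_pos.mpr h, mul_self_nonneg u.2]
    · nlinarith [mul_self_pos.mpr h, mul_self_nonneg u.1]
  have key : (u.1 * a.1 + u.2 * a.2) * cr ε u b - (u.1 * b.1 + u.2 * b.2) * cr ε u a
      = (u.1 * u.1 + u.2 * u.2) * cr ε a b := by
    unfold cr; ring
  nlinarith [mul_pos hnorm hab]

lemma hull_sub (p q q' : Pt) :
    convexHull ℝ ({p, q, q'} : Set Pt) ⊆
      {x : Pt | ∃ s t : ℝ, 0 ≤ s ∧ 0 ≤ t ∧ x - p = s • (q - p) + t • (q' - p)} := by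
  apply convexHull_min
  · intro x hx
    simp only [Set.mem_insert_iff, Set.mem_singleton_iff] at hx
    rcases hx with rfl | rfl | rfl
    · exact ⟨0, 0, le_rfl, le_rfl, by simp⟩
    · exact ⟨1, 0, zero_le_one, le_rfl, by simp⟩
    · exact ⟨0, 1, le_rfl, zero_le_one, by simp⟩
  · rintro x ⟨s1, t1, hs1, ht1, hx⟩ y ⟨s2, t2, hs2, ht2, hy⟩ a b ha hb hab
    refine ⟨a * s1 + b * s2, a * t1 + b * t2, by positivity, by positivity, ?_⟩
    have hx1 := congrArg Prod.fst hx
    have hx2 := congrArg Prod.snd hx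
    have hy1 := congrArg Prod.fst hy
    have hy2 := congrArg Prod.snd hy
    simp only [Prod.fst_sub, Prod.snd_sub, Prod.fst_add, Prod.snd_add, Prod.smul_fst,
      Prod.smul_snd, smul_eq_mul] at hx1 hx2 hy1 hy2
    apply Prod.ext <;>
      simp only [Prod.fst_sub, Prod.snd_sub, Prod.fst_add, Prod.snd_add, Prod.smul_fst,
        Prod.smul_snd, smul_eq_mul]
    · linear_combination a * hx1 + b * hy1 + p.1 * hab
    · linear_combination a * hx2 + b * hy2 + p.2 * hab


lemma rec_lemma (ε : ℝ) (p : Pt) :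
    ∀ n : ℕ, ∀ (q : Pt) (Sb Sr : Finset Pt),
    Sb.card ≤ n → q ≠ p →
    (∀ x ∈ Sb, 0 < cr ε (q - p) (x - p)) →
    (∀ r ∈ Sr, 0 < cr ε (q - p) (r - p)) →
    (∀ x ∈ Sb, ∀ y ∈ Sb, x ≠ y → cr ε (x - p) (y - p) ≠ 0) →
    (∀ x ∈ Sb, ∀ r ∈ Sr, cr ε (x - p) (r - p) ≠ 0) →
    Sr.card < Sb.card →
    ∃ a b : Pt, (a = q ∨ a ∈ Sb) ∧ b ∈ Sb ∧ 0 < cr ε (a - p) (b - p) ∧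
      ∀ r ∈ Sr, ¬ (0 < cr ε (a - p) (r - p) ∧ 0 < cr ε (r - p) (b - p)) := by
  intro n
  induction n with
  | zero =>
    intro q Sb Sr hcard _ _ _ _ _ hlt
    omega
  | succ n ih =>
    intro q Sb Sr hcard hq hSb hSr hbb hbr hlt
    classical
    have hne : Sb.Nonempty := Finset.card_pos.mp (by omega)
    obtain ⟨q2, hq2mem, hq2max⟩ := Sb.exists_max_image
      (fun x => ((q - p).1 * (x - p).1 + (q - p).2 * (x - p).2) / cr ε (q - p) (x - p)) hne
    have hq2pos : 0 < cr ε (q - p) (q2 - p) := hSb q2 hq2mem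
    have hup : q - p ≠ 0 := sub_ne_zero.mpr hq
    have hq2p : q2 ≠ p := by
      intro h
      rw [h, sub_self] at hq2pos
      rw [cr_zero_right] at hq2pos
      exact lt_irrefl _ hq2pos
    have hmin : ∀ x ∈ Sb, x ≠ q2 → 0 < cr ε (q2 - p) (x - p) := by
      intro x hx hxq
      have hne0 := hbb q2 hq2mem x hx (fun h => hxq h.symm)
      rcases hne0.lt_or_gt with hlt0 | hgt0
      · exfalso
        have hxpos : 0 < cr ε (q - p) (x - p) := hSb x hx
        have hxq2 : 0 < cr ε (x - p) (q2 - p) := by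
          have := cr_anti ε (q2 - p) (x - p); linarith
        have := key_lt hup hxpos hq2pos hxq2
        have h2 := hq2max x hx
        linarith
      · exact hgt0
    by_cases hW : ∀ r ∈ Sr, ¬ (0 < cr ε (q - p) (r - p) ∧ 0 < cr ε (r - p) (q2 - p))
    · exact ⟨q, q2, Or.inl rfl, hq2mem, hq2pos, hW⟩
    · push_neg at hW
      obtain ⟨r0, hr0, hr0a, hr0b⟩ := hW
      set Sb' := Sb.erase q2 with hSb'def
      set Sr' := Sr.filter (fun r => 0 < cr ε (q2 - p) (r - p)) with hSr'def
      have hr0not : r0 ∉ Sr' := by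
        rw [hSr'def, Finset.mem_filter]
        rintro ⟨-, hpos⟩
        have := cr_anti ε (q2 - p) (r0 - p)
        linarith
      have hsub : Sr' ⊆ Sr.erase r0 := by
        intro r hr
        rw [Finset.mem_erase]
        exact ⟨fun h => hr0not (h ▸ hr), (Finset.mem_filter.mp hr).1⟩
      have hSr'card : Sr'.card < Sr.card := by
        have h1 := Finset.card_le_card hsub
        rw [Finset.card_erase_of_mem hr0] at h1
        have : 0 < Sr.card := Finset.card_pos.mpr ⟨r0, hr0⟩
        omega
      have hSb'card : Sb'.card = Sb.card - 1 := by
        rw [hSb'def, Finset.card_erase_of_mem hq2mem]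
      obtain ⟨a, b, ha, hb, hab, hgood⟩ := ih q2 Sb' Sr'
        (by omega) hq2p
        (fun x hx => hmin x (Finset.mem_of_mem_erase hx) (Finset.ne_of_mem_erase hx))
        (fun r hr => (Finset.mem_filter.mp hr).2)
        (fun x hx y hy hxy => hbb x (Finset.mem_of_mem_erase hx) y (Finset.mem_of_mem_erase hy) hxy)
        (fun x hx r hr => hbr x (Finset.mem_of_mem_erase hx) r (Finset.mem_filter.mp hr).1)
        (by omega)
      refine ⟨a, b, ?_, Finset.mem_of_mem_erase hb, hab, ?_⟩
      · rcases ha with h | h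
        · exact Or.inr (h ▸ hq2mem)
        · exact Or.inr (Finset.mem_of_mem_erase h)
      · intro r hr
        by_cases hrin : r ∈ Sr'
        · exact hgood r hrin
        · have hne0 : cr ε (q2 - p) (r - p) ≠ 0 := hbr q2 hq2mem r hr
          have hlt0 : cr ε (q2 - p) (r - p) < 0 := by
            rcases hne0.lt_or_gt with h | h
            · exact h
            · exact absurd (Finset.mem_filter.mpr ⟨hr, h⟩) hrin
          rintro ⟨hc1, hc2⟩
          rcases ha with h | h
          · rw [h] at hc1
            linarith
          · have h2 : 0 < cr ε (q - p) (a - p) := hSb a (Finset.mem_of_mem_erase h)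
            have h3 : 0 < cr ε (q - p) (r - p) := hSr r hr
            have h4 : 0 < cr ε (q2 - p) (a - p) :=
              hmin a (Finset.mem_of_mem_erase h) (Finset.ne_of_mem_erase h)
            have h5 : 0 < cr ε (r - p) (q2 - p) := by
              have := cr_anti ε (q2 - p) (r - p); linarith
            have pl := pluecker ε (q - p) (q2 - p) (r - p) (a - p)
            have hpos : 0 < cr ε (r - p) (a - p) := by
              nlinarith [mul_pos h3 h4, mul_pos h2 h5]
            have := cr_anti ε (a - p) (r - p)
            linarith


end Stmt2Aux

open Stmt2Aux in
/-- With `b ≥ 3` blue points and at most `b - 3` red points in general position, for every blue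
point `p` there are two other blue points `q, q'` such that the closed triangle `p q q'` contains
no red point. -/
theorem stmt2 (B R : Finset Pt) (hdisj : Disjoint B R) (hgp : GenPos (B ∪ R))
    (hb : 3 ≤ B.card) (hcard : R.card + 3 ≤ B.card)
    (p : Pt) (hp : p ∈ B) :
    ∃ q ∈ B, ∃ q' ∈ B, q ≠ p ∧ q' ≠ p ∧ q ≠ q' ∧
      ∀ r ∈ R, r ∉ convexHull ℝ ({p, q, q'} : Set Pt) := by
  classical
  have hpBR : p ∈ B ∪ R := Finset.mem_union_left _ hp
  have hRne : ∀ r ∈ R, r ∉ B := fun r hr => Finset.disjoint_right.mp hdisj hr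
  have hRp : ∀ r ∈ R, r ≠ p := fun r hr h => hRne r hr (h ▸ hp)
  -- pick q1
  have h2 : (B.erase p).Nonempty := by
    rw [← Finset.card_pos, Finset.card_erase_of_mem hp]; omega
  obtain ⟨q1, hq1⟩ := h2
  have hq1B : q1 ∈ B := Finset.mem_of_mem_erase hq1
  have hq1BR : q1 ∈ B ∪ R := Finset.mem_union_left _ hq1B
  have hq1p : q1 ≠ p := Finset.ne_of_mem_erase hq1
  set X := (B.erase p).erase q1 with hXdef
  have hXcard : X.card = B.card - 2 := by
    rw [hXdef, Finset.card_erase_of_mem hq1, Finset.card_erase_of_mem hp]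
    omega
  have hXB : ∀ x ∈ X, x ∈ B := fun x hx =>
    Finset.mem_of_mem_erase (Finset.mem_of_mem_erase hx)
  have hXp : ∀ x ∈ X, x ≠ p := fun x hx =>
    Finset.ne_of_mem_erase (Finset.mem_of_mem_erase hx)
  have hXq1 : ∀ x ∈ X, x ≠ q1 := fun x hx => Finset.ne_of_mem_erase hx
  set c : Pt → ℝ := fun x => (q1 - p).1 * (x - p).2 - (q1 - p).2 * (x - p).1 with hcdef
  have hcr : ∀ (ε : ℝ) (x : Pt), cr ε (q1 - p) (x - p) = ε * c x := fun ε x => rfl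
  have hgen : ∀ x, x ∈ B ∪ R → x ≠ p → x ≠ q1 → c x ≠ 0 := by
    intro x hx hxp hxq1 h0
    refine hgp p hpBR q1 hq1BR x hx (Ne.symm hq1p) (Ne.symm hxp) (Ne.symm hxq1) ?_
    refine collinear_of_cr (ε := (1:ℝ)) one_ne_zero hq1p ?_
    rw [hcr, h0, mul_zero]
  have hRgen : ∀ r ∈ R, c r ≠ 0 := by
    intro r hr
    exact hgen r (Finset.mem_union_right _ hr) (hRp r hr)
      (fun h => hRne r hr (h ▸ hq1B))
  have hXgen : ∀ x ∈ X, c x ≠ 0 := by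
    intro x hx
    exact hgen x (Finset.mem_union_left _ (hXB x hx)) (hXp x hx) (hXq1 x hx)
  -- choose a good side
  have hsplit : ∃ ε : ℝ, (ε = 1 ∨ ε = -1) ∧
      (R.filter fun r => 0 < ε * c r).card < (X.filter fun x => 0 < ε * c x).card := by
    by_contra hcon
    push_neg at hcon
    have h1 := hcon 1 (Or.inl rfl)
    have h2 := hcon (-1) (Or.inr rfl)
    have hXpart : (X.filter fun x => 0 < (1:ℝ) * c x).card
        + (X.filter fun x => 0 < (-1:ℝ) * c x).card = X.card := by
      have heqf : Finset.filter (fun x => 0 < (-1:ℝ) * c x) X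
          = Finset.filter (fun x => ¬ 0 < (1:ℝ) * c x) X := by
        apply Finset.filter_congr
        intro x hx
        have hne := hXgen x hx
        constructor
        · intro h h2; linarith
        · intro h
          rcases hne.lt_or_gt with h' | h'
          · linarith
          · exact absurd (by linarith) h
      rw [heqf, Finset.card_filter_add_card_filter_not (s := X)
        (p := fun x => 0 < (1:ℝ) * c x)]
    have hRpart : (R.filter fun r => 0 < (1:ℝ) * c r).card
        + (R.filter fun r => 0 < (-1:ℝ) * c r).card = R.card := by
      have heqf : Finset.filter (fun r => 0 < (-1:ℝ) * c r) R
          = Finset.filter (fun r => ¬ 0 < (1:ℝ) * c r) R := by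
        apply Finset.filter_congr
        intro r hr
        have hne := hRgen r hr
        constructor
        · intro h h2; linarith
        · intro h
          rcases hne.lt_or_gt with h' | h'
          · linarith
          · exact absurd (by linarith) h
      rw [heqf, Finset.card_filter_add_card_filter_not (s := R)
        (p := fun r => 0 < (1:ℝ) * c r)]
    omega
  obtain ⟨ε, hε, hcount⟩ := hsplit
  have hεne : ε ≠ 0 := by rcases hε with h | h <;> rw [h] <;> norm_num
  set Sb := X.filter (fun x => 0 < ε * c x) with hSbdef
  set Sr := R.filter (fun r => 0 < ε * c r) with hSrdef
  have hSbB : ∀ x ∈ Sb, x ∈ B := fun x hx => hXB x (Finset.mem_filter.mp hx).1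
  have hSbp : ∀ x ∈ Sb, x ≠ p := fun x hx => hXp x (Finset.mem_filter.mp hx).1
  have hSbpos : ∀ x ∈ Sb, 0 < cr ε (q1 - p) (x - p) := by
    intro x hx
    rw [hcr]
    exact (Finset.mem_filter.mp hx).2
  have hSrpos : ∀ r ∈ Sr, 0 < cr ε (q1 - p) (r - p) := by
    intro r hr
    rw [hcr]
    exact (Finset.mem_filter.mp hr).2
  have hbb : ∀ x ∈ Sb, ∀ y ∈ Sb, x ≠ y → cr ε (x - p) (y - p) ≠ 0 := by
    intro x hx y hy hxy h0
    refine hgp p hpBR x (Finset.mem_union_left _ (hSbB x hx))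
      y (Finset.mem_union_left _ (hSbB y hy))
      (Ne.symm (hSbp x hx)) (Ne.symm (hSbp y hy)) hxy ?_
    exact collinear_of_cr hεne (hSbp x hx) h0
  have hbr : ∀ x ∈ Sb, ∀ r ∈ Sr, cr ε (x - p) (r - p) ≠ 0 := by
    intro x hx r hr h0
    have hrR : r ∈ R := (Finset.mem_filter.mp hr).1
    refine hgp p hpBR x (Finset.mem_union_left _ (hSbB x hx))
      r (Finset.mem_union_right _ hrR)
      (Ne.symm (hSbp x hx)) (Ne.symm (hRp r hrR))
      (fun h => hRne r hrR (h ▸ hSbB x hx)) ?_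
    exact collinear_of_cr hεne (hSbp x hx) h0
  obtain ⟨a, b, ha, hbmem, hD, hgood⟩ := rec_lemma ε p Sb.card q1 Sb Sr le_rfl hq1p
    hSbpos hSrpos hbb hbr hcount
  have haB : a ∈ B := by
    rcases ha with h | h
    · exact h ▸ hq1B
    · exact hSbB a h
  have hap : a ≠ p := by
    rcases ha with h | h
    · exact h ▸ hq1p
    · exact hSbp a h
  have hbB : b ∈ B := hSbB b hbmem
  have hbp : b ≠ p := hSbp b hbmem
  have hanb : a ≠ b := by
    intro h
    rw [h, cr_self] at hD
    exact lt_irrefl _ hD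
  refine ⟨a, haB, b, hbB, hap, hbp, hanb, ?_⟩
  intro r hr hmem
  have hrp : r ≠ p := hRp r hr
  have hra : r ≠ a := fun h => hRne r hr (h ▸ haB)
  have hrb : r ≠ b := fun h => hRne r hr (h ▸ hbB)
  have hrBR : r ∈ B ∪ R := Finset.mem_union_right _ hr
  obtain ⟨s, t, hs, ht, heq⟩ := hull_sub p a b hmem
  have hca : cr ε (a - p) (r - p) = t * cr ε (a - p) (b - p) := by
    rw [heq, cr_comb, cr_self]
    ring
  have hcb : cr ε (r - p) (b - p) = s * cr ε (a - p) (b - p) := by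
    have h1 : cr ε (b - p) (r - p) = s * cr ε (b - p) (a - p) := by
      rw [heq, cr_comb, cr_self]
      ring
    have h2 := cr_anti ε (r - p) (b - p)
    have h3 := cr_anti ε (b - p) (a - p)
    linear_combination h2 - h1 - s * h3
  rcases eq_or_lt_of_le ht with ht0 | htpos
  · -- t = 0 : r collinear with p, a
    have : cr ε (a - p) (r - p) = 0 := by rw [hca, ← ht0]; ring
    exact hgp p hpBR a (Finset.mem_union_left _ haB) r hrBR
      (Ne.symm hap) (Ne.symm hrp) (Ne.symm hra)
      (collinear_of_cr hεne hap this)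
  rcases eq_or_lt_of_le hs with hs0 | hspos
  · -- s = 0 : r collinear with p, b
    have h0 : cr ε (r - p) (b - p) = 0 := by rw [hcb, ← hs0]; ring
    have h1 : cr ε (b - p) (r - p) = 0 := by
      have := cr_anti ε (b - p) (r - p); linarith
    exact hgp p hpBR b (Finset.mem_union_left _ hbB) r hrBR
      (Ne.symm hbp) (Ne.symm hrp) (Ne.symm hrb)
      (collinear_of_cr hεne hbp h1)
  -- s, t > 0
  have hc1 : 0 < cr ε (a - p) (r - p) := by rw [hca]; exact mul_pos htpos hD
  have hc2 : 0 < cr ε (r - p) (b - p) := by rw [hcb]; exact mul_pos hspos hD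
  by_cases hrin : r ∈ Sr
  · exact hgood r hrin ⟨hc1, hc2⟩
  · -- r not in the half-plane, but it must be
    have hneg : ¬ (0 < ε * c r) := fun h => hrin (Finset.mem_filter.mpr ⟨hr, h⟩)
    have hq1r : cr ε (q1 - p) (r - p) =
        s * cr ε (q1 - p) (a - p) + t * cr ε (q1 - p) (b - p) := by
      rw [heq, cr_comb]
    have hq1b : 0 < cr ε (q1 - p) (b - p) := hSbpos b hbmem
    have hq1a : 0 ≤ cr ε (q1 - p) (a - p) := by
      rcases ha with h | h
      · rw [h, cr_self]
      · exact le_of_lt (hSbpos a h)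
    have : 0 < cr ε (q1 - p) (r - p) := by
      rw [hq1r]
      have := mul_pos htpos hq1b
      nlinarith [mul_nonneg (le_of_lt hspos) hq1a]
    rw [hcr] at this
    exact hneg this
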